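/- γ_rdR(K_n ⊙ K₁) = 2n + 1 for n ≠ 2, and γ_rdR(K₂ ⊙ K₁) = 6. -/

import Mathlib

open SimpleGraph Finset

/-- A restrained double Roman dominating function. -/
def IsRDRD {α : Type*} (G : SimpleGraph α) (f : α → ℕ) : Prop :=
  (∀ v, f v ≤ 3) ∧
  (∀ v, f v = 0 →
    (∃ u, G.Adj v u ∧ f u = 3) ∨
    (∃ u w, u ≠ w ∧ G.Adj v u ∧ G.Adj v w ∧ f u = 2 ∧ f w = 2)) ∧
  (∀ v, f v = 1 → ∃ u, G.Adj v u ∧ 2 ≤ f u) ∧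
  (∀ v, f v = 0 → ∃ u, G.Adj v u ∧ f u = 0)

/-- The restrained double Roman domination number. -/
noncomputable def gammaRdR {α : Type*} (G : SimpleGraph α) [Fintype α] : ℕ :=
  sInf {w | ∃ f, IsRDRD G f ∧ ∑ v, f v = w}

/-- The strong product of two simple graphs. -/
def strongProd {α β : Type*} (G : SimpleGraph α) (H : SimpleGraph β) :
    SimpleGraph (α × β) where
  Adj p q := p ≠ q ∧ (G.Adj p.1 q.1 ∨ p.1 = q.1) ∧ (H.Adj p.2 q.2 ∨ p.2 = q.2)
  symm := ⟨by
    rintro p q ⟨h1, h2, h3⟩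
    exact ⟨h1.symm, h2.imp (fun h => h.symm) Eq.symm, h3.imp (fun h => h.symm) Eq.symm⟩⟩
  loopless := ⟨by rintro p ⟨h1, _⟩; exact h1 rfl⟩

/-- The cardinal (direct/tensor) product of two simple graphs. -/
def cardProd {α β : Type*} (G : SimpleGraph α) (H : SimpleGraph β) :
    SimpleGraph (α × β) where
  Adj p q := G.Adj p.1 q.1 ∧ H.Adj p.2 q.2
  symm := ⟨by rintro p q ⟨h1, h2⟩; exact ⟨h1.symm, h2.symm⟩⟩
  loopless := ⟨by rintro p ⟨h1, _⟩; exact h1.ne rfl⟩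

/-- The corona of two simple graphs. -/
def corona {α β : Type*} (G : SimpleGraph α) (H : SimpleGraph β) :
    SimpleGraph (α ⊕ α × β) where
  Adj x y :=
    match x, y with
    | .inl u, .inl v => G.Adj u v
    | .inl u, .inr (v, _) => u = v
    | .inr (v, _), .inl u => u = v
    | .inr (u, a), .inr (v, b) => u = v ∧ H.Adj a b
  symm := ⟨by
    rintro (u | ⟨u, a⟩) (v | ⟨v, b⟩) h
    · exact h.symm
    · exact h
    · exact h
    · exact ⟨h.1.symm, h.2.symm⟩⟩
  loopless := ⟨by
    rintro (u | ⟨u, a⟩) h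
    · exact h.ne rfl
    · exact h.2.ne rfl⟩

abbrev GcAux (n : ℕ) : SimpleGraph (Fin n ⊕ Fin n × Fin 1) :=
  corona (⊤ : SimpleGraph (Fin n)) (⊥ : SimpleGraph (Fin 1))

lemma pend_adj_aux {n : ℕ} {u : Fin n} {a : Fin 1} {x} (h : (GcAux n).Adj (.inr (u,a)) x) :
    x = Sum.inl u := by
  cases x with
  | inl v => exact congrArg Sum.inl h
  | inr p => obtain ⟨v, b⟩ := p; exact absurd h.2 (by simp)

lemma inl_adj_aux {n : ℕ} {u : Fin n} {x} (h : (GcAux n).Adj (.inl u) x) :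
    (∃ v, x = Sum.inl v ∧ v ≠ u) ∨ x = Sum.inr (u, 0) := by
  cases x with
  | inl v => exact Or.inl ⟨v, rfl, Ne.symm h⟩
  | inr p =>
    obtain ⟨v, b⟩ := p
    right
    have hb : b = 0 := Subsingleton.elim _ _
    have hv : u = v := h
    rw [hb, hv]

lemma sum_split {n : ℕ} (f : Fin n ⊕ Fin n × Fin 1 → ℕ) :
    ∑ v, f v = ∑ u : Fin n, (f (.inl u) + f (.inr (u, 0))) := by
  rw [Fintype.sum_sum_type, Finset.sum_add_distrib]
  congr 1
  rw [Fintype.sum_prod_type]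
  simp [Fin.sum_univ_one]

lemma pair_cases {n : ℕ} {f : Fin n ⊕ Fin n × Fin 1 → ℕ} (hf : IsRDRD (GcAux n) f) (u : Fin n)
    (h2 : f (.inl u) + f (.inr (u,0)) ≤ 2) : f (.inl u) = 0 ∧ f (.inr (u,0)) = 2 := by
  obtain ⟨h3, h0, h1, hr⟩ := hf
  have hne : f (.inr (u,0)) ≠ 0 := by
    intro h
    obtain ⟨x, hadj, hx0⟩ := hr _ h
    have hx := pend_adj_aux hadj; subst hx
    rcases h0 _ h with ⟨y, hady, hy3⟩ | ⟨y, z, hyz, hady, hadz, _, _⟩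
    · have := pend_adj_aux hady; subst this; omega
    · have hy := pend_adj_aux hady; have hz := pend_adj_aux hadz
      exact hyz (hy.trans hz.symm)
  have hnot1 : f (.inr (u,0)) = 1 → 2 ≤ f (.inl u) := by
    intro h1'
    obtain ⟨x, hadj, hx2⟩ := h1 _ h1'
    have := pend_adj_aux hadj; subst this; omega
  by_cases hp : f (.inr (u,0)) = 1
  · have := hnot1 hp; omega
  · omega

lemma pend_ge {n : ℕ} {f : Fin n ⊕ Fin n × Fin 1 → ℕ} (hf : IsRDRD (GcAux n) f) (u : Fin n) :
    2 ≤ f (.inl u) + f (.inr (u, 0)) := by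
  by_contra hc
  push_neg at hc
  obtain ⟨_, h2⟩ := pair_cases hf u (by omega)
  omega

lemma lb_gen {n : ℕ} (hn : 1 ≤ n) {f : Fin n ⊕ Fin n × Fin 1 → ℕ}
    (hf : IsRDRD (GcAux n) f) : 2 * n + 1 ≤ ∑ v, f v := by
  rw [sum_split]
  set g : Fin n → ℕ := fun u => f (.inl u) + f (.inr (u,0)) with hg
  have hge2 : ∀ u, 2 ≤ g u := pend_ge hf
  have hex : ∃ u : Fin n, 3 ≤ g u := by
    by_contra hc
    push_neg at hc
    have hzz : ∀ u : Fin n, f (.inl u) = 0 ∧ f (.inr (u,0)) = 2 := fun u =>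
      pair_cases hf u (by have := hc u; simp only [hg] at this; omega)
    obtain ⟨h3, h0, h1, hr⟩ := hf
    set u0 : Fin n := ⟨0, hn⟩
    rcases h0 _ (hzz u0).1 with ⟨y, hady, hy3⟩ | ⟨y, z, hyz, hady, hadz, hy2, hz2⟩
    · rcases inl_adj_aux hady with ⟨v, rfl, hv⟩ | rfl
      · have := (hzz v).1; omega
      · have := (hzz u0).2; omega
    · have hy' : y = Sum.inr (u0, 0) := by
        rcases inl_adj_aux hady with ⟨v, rfl, hv⟩ | rfl
        · have := (hzz v).1; omega
        · rfl
      have hz' : z = Sum.inr (u0, 0) := by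
        rcases inl_adj_aux hadz with ⟨v, rfl, hv⟩ | rfl
        · have := (hzz v).1; omega
        · rfl
      exact hyz (hy'.trans hz'.symm)
  obtain ⟨u0, hu0⟩ := hex
  rw [← Finset.add_sum_erase Finset.univ g (Finset.mem_univ u0)]
  have hrest : (Finset.univ.erase u0).card • 2 ≤ ∑ u ∈ Finset.univ.erase u0, g u :=
    Finset.card_nsmul_le_sum _ _ _ (fun x _ => hge2 x)
  have hcard : (Finset.univ.erase u0).card = n - 1 := by
    rw [Finset.card_erase_of_mem (Finset.mem_univ _), Finset.card_univ, Fintype.card_fin]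
  rw [hcard, smul_eq_mul] at hrest
  omega

lemma lb_two {f : Fin 2 ⊕ Fin 2 × Fin 1 → ℕ} (hf : IsRDRD (GcAux 2) f) :
    6 ≤ ∑ v, f v := by
  rw [sum_split]
  have key : ∀ u : Fin 2, 3 ≤ f (.inl u) + f (.inr (u,0)) := by
    intro u
    by_contra hc
    push_neg at hc
    obtain ⟨hi0, hp2⟩ := pair_cases hf u (by omega)
    obtain ⟨h3, h0, h1, hr⟩ := hf
    obtain ⟨x, hadj, hx0⟩ := hr _ hi0
    have hx' : ∃ v, x = Sum.inl v ∧ v ≠ u := by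
      rcases inl_adj_aux hadj with h | rfl
      · exact h
      · omega
    obtain ⟨v, rfl, hvu⟩ := hx'
    have huniq : ∀ w : Fin 2, w ≠ u → w = v := by
      intro w hw
      have hw' : w.val ≠ u.val := fun h => hw (Fin.ext h)
      have hv' : v.val ≠ u.val := fun h => hvu (Fin.ext h)
      have := w.isLt; have := u.isLt; have := v.isLt
      exact Fin.ext (by omega)
    rcases h0 _ hi0 with ⟨y, hady, hy3⟩ | ⟨y, z, hyz, hady, hadz, hy2, hz2⟩
    · rcases inl_adj_aux hady with ⟨w, rfl, hw⟩ | rfl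
      · have := huniq w hw; subst this; omega
      · omega
    · have hy' : y = Sum.inr (u,0) := by
        rcases inl_adj_aux hady with ⟨w, rfl, hw⟩ | rfl
        · have := huniq w hw; subst this; omega
        · rfl
      have hz' : z = Sum.inr (u,0) := by
        rcases inl_adj_aux hadz with ⟨w, rfl, hw⟩ | rfl
        · have := huniq w hw; subst this; omega
        · rfl
      exact hyz (hy'.trans hz'.symm)
  rw [Fin.sum_univ_two]
  have := key 0; have := key 1
  omega

def fA (n : ℕ) : Fin n ⊕ Fin n × Fin 1 → ℕ :=
  Sum.elim (fun u => if (u : ℕ) = 0 then 2 else 0) (fun p => if (p.1 : ℕ) = 0 then 1 else 2)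

lemma fA_rdrd {n : ℕ} (hn : 1 ≤ n) (hne : n ≠ 2) : IsRDRD (GcAux n) (fA n) := by
  refine ⟨?_, ?_, ?_, ?_⟩
  · rintro (u | ⟨u, a⟩) <;> dsimp [fA] <;> split <;> omega
  · rintro (u | ⟨u, a⟩) h
    · dsimp [fA] at h
      have hu : (u : ℕ) ≠ 0 := by intro h0; rw [if_pos h0] at h; omega
      right
      refine ⟨Sum.inl ⟨0, hn⟩, Sum.inr (u, 0), by simp, ?_, ?_, ?_, ?_⟩
      · exact fun he => hu (by rw [he])
      · rfl
      · dsimp [fA]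
      · dsimp [fA]; rw [if_neg hu]
    · dsimp [fA] at h; split at h <;> omega
  · rintro (u | ⟨u, a⟩) h
    · dsimp [fA] at h; split at h <;> omega
    · dsimp [fA] at h
      have hu : (u : ℕ) = 0 := by by_contra hc; rw [if_neg hc] at h; omega
      exact ⟨Sum.inl u, rfl, by dsimp [fA]; rw [if_pos hu]⟩
  · rintro (u | ⟨u, a⟩) h
    · dsimp [fA] at h
      have hu : (u : ℕ) ≠ 0 := by intro h0; rw [if_pos h0] at h; omega
      have hn3 : 3 ≤ n := by have := u.isLt; omega
      by_cases h1 : (u : ℕ) = 1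
      · refine ⟨Sum.inl ⟨2, by omega⟩, ?_, ?_⟩
        · intro he
          have : (u : ℕ) = 2 := congrArg Fin.val he
          omega
        · dsimp [fA]
      · refine ⟨Sum.inl ⟨1, by omega⟩, ?_, ?_⟩
        · intro he
          have : (u : ℕ) = 1 := congrArg Fin.val he
          omega
        · dsimp [fA]
    · dsimp [fA] at h; split at h <;> omega

lemma fA_sum {n : ℕ} (hn : 1 ≤ n) : ∑ v, fA n v = 2 * n + 1 := by
  rw [sum_split]
  have hpt : ∀ u : Fin n, fA n (.inl u) + fA n (.inr (u,0)) = if (u : ℕ) = 0 then 3 else 2 := by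
    intro u; by_cases h : (u : ℕ) = 0 <;> simp [fA, h]
  rw [Finset.sum_congr rfl (fun u _ => hpt u)]
  rw [← Finset.add_sum_erase _ _ (Finset.mem_univ (⟨0, hn⟩ : Fin n))]
  have hrest : ∀ u ∈ Finset.univ.erase (⟨0, hn⟩ : Fin n),
      (if (u : ℕ) = 0 then 3 else 2) = 2 := by
    intro u hu
    rw [if_neg]
    intro h0
    exact (Finset.mem_erase.mp hu).1 (Fin.ext h0)
  rw [Finset.sum_congr rfl hrest, Finset.sum_const,
    Finset.card_erase_of_mem (Finset.mem_univ _), Finset.card_univ, Fintype.card_fin,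
    smul_eq_mul, if_pos rfl]
  omega

def fB : Fin 2 ⊕ Fin 2 × Fin 1 → ℕ := Sum.elim (fun _ => 2) (fun _ => 1)

lemma fB_rdrd : IsRDRD (GcAux 2) fB := by
  refine ⟨?_, ?_, ?_, ?_⟩
  · rintro (u | ⟨u, a⟩) <;> simp [fB]
  · rintro (u | ⟨u, a⟩) h <;> simp [fB] at h
  · rintro (u | ⟨u, a⟩) h
    · simp [fB] at h
    · exact ⟨Sum.inl u, rfl, by simp [fB]⟩
  · rintro (u | ⟨u, a⟩) h <;> simp [fB] at h

lemma fB_sum : ∑ v, fB v = 6 := by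
  rw [sum_split]
  simp [fB, Fin.sum_univ_two]

theorem stmt14 (n : ℕ) (hn : 1 ≤ n) :
    (n ≠ 2 → gammaRdR (corona (⊤ : SimpleGraph (Fin n)) (⊥ : SimpleGraph (Fin 1)))
        = 2 * n + 1) ∧
    gammaRdR (corona (⊤ : SimpleGraph (Fin 2)) (⊥ : SimpleGraph (Fin 1))) = 6 := by
  constructor
  · intro hne
    apply le_antisymm
    · exact Nat.sInf_le ⟨fA n, fA_rdrd hn hne, fA_sum hn⟩
    · refine le_csInf ⟨2 * n + 1, fA n, fA_rdrd hn hne, fA_sum hn⟩ ?_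
      rintro w ⟨f, hf, rfl⟩
      exact lb_gen hn hf
  · apply le_antisymm
    · exact Nat.sInf_le ⟨fB, fB_rdrd, fB_sum⟩
    · refine le_csInf ⟨6, fB, fB_rdrd, fB_sum⟩ ?_
      rintro w ⟨f, hf, rfl⟩
      exact lb_two hf
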